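/- Let E be a reflexive Banach space and T : E → E* a bounded, continuous, strictly monotone, coercive operator of type (S₊). Then T is a bijection and its inverse T⁻¹ : E* → E is continuous; moreover T⁻¹ maps bounded sets to bounded sets. -/

import Mathlib

open Filter Bornology

section MintyBrowderAux

lemma matrix_game {n : ℕ} (hn : 0 < n) (M : Fin n → Fin n → ℝ) (_hd : ∀ i, M i i = 0)
    (hs : ∀ i j, 0 ≤ M i j + M j i) :
    ∃ l : Fin n → ℝ, (∀ j, 0 ≤ l j) ∧ ∑ j, l j = 1 ∧ ∀ i, 0 ≤ ∑ j, l j * M i j := by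
  by_contra hcon
  push_neg at hcon
  have : Nonempty (Fin n) := ⟨⟨0, hn⟩⟩
  let A : (Fin n → ℝ) →ₗ[ℝ] (Fin n → ℝ) :=
    { toFun := fun l => fun i => ∑ j, l j * M i j
      map_add' := by
        intro a b; funext i
        simp [add_mul, Finset.sum_add_distrib]
      map_smul' := by
        intro c a; funext i
        simp [Finset.mul_sum, mul_assoc] }
  have hA : ∀ (l : Fin n → ℝ) i, A l i = ∑ j, l j * M i j := fun l i => rfl
  have hAcont : Continuous (A : (Fin n → ℝ) → (Fin n → ℝ)) := by
    show Continuous fun l : Fin n → ℝ => (fun i => ∑ j, l j * M i j)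
    apply continuous_pi
    intro i
    exact continuous_finset_sum _ fun j _ => (continuous_apply j).mul continuous_const
  have hScv : Convex ℝ (stdSimplex ℝ (Fin n)) := convex_stdSimplex ℝ (Fin n)
  have hScp : IsCompact (stdSimplex ℝ (Fin n)) := isCompact_stdSimplex ℝ (Fin n)
  set C : Set (Fin n → ℝ) := A '' (stdSimplex ℝ (Fin n)) with hC
  have hCcv : Convex ℝ C := hScv.linear_image A
  have hCcp : IsCompact C := hScp.image hAcont
  set P : Set (Fin n → ℝ) := {x | ∀ i, 0 ≤ x i} with hP
  have hPcv : Convex ℝ P := by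
    intro x hx y hy a b ha hb _ i
    show 0 ≤ a * x i + b * y i
    exact add_nonneg (mul_nonneg ha (hx i)) (mul_nonneg hb (hy i))
  have hPcl : IsClosed P := by
    have : P = ⋂ i, {x : Fin n → ℝ | 0 ≤ x i} := by
      ext x; simp [hP, Set.mem_iInter]
    rw [this]
    exact isClosed_iInter fun i => isClosed_le continuous_const (continuous_apply i)
  have hdisj : Disjoint C P := by
    rw [Set.disjoint_left]
    rintro x ⟨l, hl, rfl⟩ hxP
    obtain ⟨i, hi⟩ := hcon l hl.1 hl.2
    exact absurd (hxP i) (by simpa [hA] using hi)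
  obtain ⟨f, u, v, hfC, huv, hfP⟩ :=
    geometric_hahn_banach_compact_closed hCcv hCcp hPcv hPcl hdisj
  have hv0 : v < 0 := by
    have := hfP 0 (fun i => le_rfl)
    simpa using this
  have hfPnn : ∀ b ∈ P, 0 ≤ f b := by
    intro b hb
    by_contra hneg
    push_neg at hneg
    have hr : (0:ℝ) < (v - 1) / f b := div_pos_of_neg_of_neg (by linarith) hneg
    have hmem : ((v - 1) / f b) • b ∈ P := by
      intro i
      show 0 ≤ ((v - 1) / f b) * b i
      exact mul_nonneg hr.le (hb i)
    have := hfP _ hmem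
    rw [map_smul] at this
    simp only [smul_eq_mul] at this
    rw [div_mul_cancel₀ _ (ne_of_lt hneg)] at this
    linarith
  set μ : Fin n → ℝ := fun j => f (Pi.single j (1:ℝ)) with hμ
  have hμnn : ∀ j, 0 ≤ μ j := by
    intro j
    apply hfPnn
    intro i
    by_cases h : i = j <;> simp [Pi.single_apply, h]
  have hrep : ∀ x : Fin n → ℝ, f x = ∑ j, x j * μ j := by
    intro x
    have hx : x = ∑ j, x j • (Pi.single j (1:ℝ) : Fin n → ℝ) := by
      funext i
      simp [Finset.sum_apply, Pi.single_apply]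
    conv_lhs => rw [hx]
    rw [map_sum]
    refine Finset.sum_congr rfl fun j _ => ?_
    rw [map_smul]
    simp [hμ]
  have hSne : (stdSimplex ℝ (Fin n)).Nonempty := by
    refine ⟨fun _ => (n : ℝ)⁻¹, fun j => by positivity, ?_⟩
    rw [Finset.sum_const, Finset.card_univ, Fintype.card_fin, nsmul_eq_mul]
    field_simp
  obtain ⟨l₀, hl₀⟩ := hSne
  have hfa : f (A l₀) < 0 := lt_trans (hfC _ ⟨l₀, hl₀, rfl⟩) (lt_trans huv hv0)
  have hμne : ∃ j, 0 < μ j := by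
    by_contra hall
    push_neg at hall
    have hz : ∀ j, μ j = 0 := fun j => le_antisymm (hall j) (hμnn j)
    have : f (A l₀) = 0 := by
      rw [hrep]; simp [hz]
    linarith
  obtain ⟨j₀, hj₀⟩ := hμne
  have hμsum : 0 < ∑ j, μ j :=
    Finset.sum_pos' (fun j _ => hμnn j) ⟨j₀, Finset.mem_univ j₀, hj₀⟩
  set l : Fin n → ℝ := fun j => μ j / (∑ k, μ k) with hl
  have hlS : l ∈ stdSimplex ℝ (Fin n) := by
    constructor
    · intro j
      exact div_nonneg (hμnn j) hμsum.le
    · rw [hl, ← Finset.sum_div]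
      exact div_self (ne_of_gt hμsum)
  have hQ : 0 ≤ ∑ i, ∑ j, μ i * μ j * M i j := by
    set Q := ∑ i, ∑ j, μ i * μ j * M i j with hQdef
    have hswap : Q = ∑ i, ∑ j, μ i * μ j * M j i := by
      rw [hQdef, Finset.sum_comm]
      refine Finset.sum_congr rfl fun i _ => Finset.sum_congr rfl fun j _ => by ring
    have h2Q : Q + Q = ∑ i, ∑ j, μ i * μ j * (M i j + M j i) := by
      calc Q + Q = ∑ i, ∑ j, μ i * μ j * M i j + ∑ i, ∑ j, μ i * μ j * M j i := by
            rw [← hswap]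
        _ = ∑ i, (∑ j, μ i * μ j * M i j + ∑ j, μ i * μ j * M j i) := by
            rw [← Finset.sum_add_distrib]
        _ = ∑ i, ∑ j, (μ i * μ j * M i j + μ i * μ j * M j i) := by
            refine Finset.sum_congr rfl fun i _ => ?_
            rw [← Finset.sum_add_distrib]
        _ = ∑ i, ∑ j, μ i * μ j * (M i j + M j i) := by
            refine Finset.sum_congr rfl fun i _ => Finset.sum_congr rfl fun j _ => by ring
    have hQQ : 0 ≤ Q + Q := by
      rw [h2Q]
      apply Finset.sum_nonneg
      intro i _
      apply Finset.sum_nonneg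
      intro j _
      exact mul_nonneg (mul_nonneg (hμnn i) (hμnn j)) (hs i j)
    linarith
  have hfAl : 0 ≤ f (A l) := by
    rw [hrep]
    have key : ∑ j, A l j * μ j = (∑ i, ∑ j, μ i * μ j * M i j) / (∑ k, μ k) := by
      rw [Finset.sum_div]
      refine Finset.sum_congr rfl fun i _ => ?_
      rw [hA, Finset.sum_mul, Finset.sum_div]
      refine Finset.sum_congr rfl fun j _ => ?_
      simp only [hl]
      ring
    rw [key]
    exact div_nonneg hQ hμsum.le
  have := hfC (A l) ⟨l, hlS, rfl⟩
  linarith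


lemma exists_ultrafilter_weak_limit {E : Type*} [NormedAddCommGroup E] [NormedSpace ℝ E]
    (hrefl : Function.Surjective (NormedSpace.inclusionInDoubleDual ℝ E))
    {ι : Type*} (U : Ultrafilter ι) (u : ι → E) (C : ℝ)
    (hb : ∀ i, ‖u i‖ ≤ C) :
    ∃ w : E, ‖w‖ ≤ C ∧
      ∀ φ : StrongDual ℝ E, Tendsto (fun i => φ (u i)) U (nhds (φ w)) := by
  have hC0 : 0 ≤ C := by
    obtain ⟨i⟩ := Filter.nonempty_of_neBot (U : Filter ι)
    exact le_trans (norm_nonneg _) (hb i)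
  -- for each functional, an ultrafilter limit exists
  have hlim : ∀ φ : StrongDual ℝ E, ∃ r : ℝ, |r| ≤ C * ‖φ‖ ∧
      Tendsto (fun i => φ (u i)) U (nhds r) := by
    intro φ
    have hmem : ∀ i, φ (u i) ∈ Set.Icc (-(C * ‖φ‖)) (C * ‖φ‖) := by
      intro i
      have h1 : |φ (u i)| ≤ ‖φ‖ * ‖u i‖ := by
        simpa using φ.le_opNorm (u i)
      have h2 : ‖φ‖ * ‖u i‖ ≤ ‖φ‖ * C := by
        exact mul_le_mul_of_nonneg_left (hb i) (norm_nonneg φ)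
      rw [Set.mem_Icc]
      constructor <;> [linarith [neg_abs_le (φ (u i))]; linarith [le_abs_self (φ (u i))]]
    have hle : (U.map fun i => φ (u i) : Filter ℝ) ≤ Filter.principal (Set.Icc (-(C * ‖φ‖)) (C * ‖φ‖)) := by
      rw [Filter.le_principal_iff]
      exact Filter.mem_map.mpr (Filter.Eventually.of_forall hmem |>.mono fun _ h => h)
    obtain ⟨r, hrmem, hrle⟩ := (isCompact_Icc (a := -(C * ‖φ‖)) (b := C * ‖φ‖)).ultrafilter_le_nhds
      (U.map fun i => φ (u i)) hle
    refine ⟨r, abs_le.mpr ⟨by linarith [hrmem.1, mul_comm C ‖φ‖], by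
        have := hrmem.2; linarith [mul_comm C ‖φ‖]⟩, hrle⟩
  choose L hLb hLt using hlim
  -- L is linear
  have hadd : ∀ φ ψ, L (φ + ψ) = L φ + L ψ := by
    intro φ ψ
    refine tendsto_nhds_unique (hLt (φ + ψ)) ?_
    have := (hLt φ).add (hLt ψ)
    simpa using this
  have hsmul : ∀ (c : ℝ) φ, L (c • φ) = c * L φ := by
    intro c φ
    refine tendsto_nhds_unique (hLt (c • φ)) ?_
    have := (hLt φ).const_mul c
    simpa using this
  let Φ : StrongDual ℝ E →L[ℝ] ℝ :=
    LinearMap.mkContinuous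
      { toFun := L, map_add' := hadd, map_smul' := hsmul } C
      (fun φ => by simpa [Real.norm_eq_abs, mul_comm] using hLb φ)
  obtain ⟨w, hw⟩ := hrefl Φ
  have hwφ : ∀ φ : StrongDual ℝ E, φ w = L φ := by
    intro φ
    have h1 : (NormedSpace.inclusionInDoubleDual ℝ E) w φ = Φ φ := by rw [hw]
    rw [NormedSpace.dual_def] at h1
    exact h1
  refine ⟨w, ?_, fun φ => ?_⟩
  · refine NormedSpace.norm_le_dual_bound ℝ w hC0 fun φ => ?_
    rw [hwφ φ]
    simpa [Real.norm_eq_abs, mul_comm] using hLb φ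
  · rw [hwφ φ]
    exact hLt φ


variable {E : Type*} [NormedAddCommGroup E] [NormedSpace ℝ E]

lemma galerkin (T : E → StrongDual ℝ E)
    (hmono' : ∀ a b : E, 0 ≤ (T a - T b) (a - b)) (f : StrongDual ℝ E)
    (R : ℝ) (S : Finset E) (hSb : ∀ v ∈ S, ‖v‖ ≤ R) (hSne : S.Nonempty) :
    ∃ u : E, ‖u‖ ≤ R ∧ ∀ v ∈ S, 0 ≤ (T v - f) (v - u) := by
  classical
  set n := S.card with hn
  have hnpos : 0 < n := Finset.card_pos.mpr hSne
  set e : Fin n ≃ S := S.equivFin.symm with he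
  set v : Fin n → E := fun i => (e i : E) with hv
  have hvb : ∀ i, ‖v i‖ ≤ R := fun i => hSb _ (e i).2
  set M : Fin n → Fin n → ℝ := fun i j => (T (v i) - f) (v i - v j) with hM
  have hd : ∀ i, M i i = 0 := by intro i; simp [hM]
  have hs : ∀ i j, 0 ≤ M i j + M j i := by
    intro i j
    have hkey : M i j + M j i = (T (v i) - T (v j)) (v i - v j) := by
      simp only [hM, ContinuousLinearMap.sub_apply, map_sub]
      ring
    rw [hkey]
    exact hmono' _ _
  obtain ⟨l, hl0, hl1, hlM⟩ := matrix_game hnpos M hd hs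
  refine ⟨∑ j, l j • v j, ?_, ?_⟩
  · calc ‖∑ j, l j • v j‖ ≤ ∑ j, ‖l j • v j‖ := norm_sum_le _ _
      _ ≤ ∑ j, l j * R := by
          refine Finset.sum_le_sum fun j _ => ?_
          rw [norm_smul, Real.norm_eq_abs, abs_of_nonneg (hl0 j)]
          exact mul_le_mul_of_nonneg_left (hvb j) (hl0 j)
      _ = R := by rw [← Finset.sum_mul, hl1, one_mul]
  · intro z hz
    obtain ⟨i, hi⟩ : ∃ i, v i = z := ⟨e.symm ⟨z, hz⟩, by simp [hv]⟩
    subst hi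
    have hsplit : v i - (∑ j, l j • v j) = ∑ j, l j • (v i - v j) := by
      rw [Finset.sum_congr rfl (fun j _ => smul_sub (l j) (v i) (v j)),
        Finset.sum_sub_distrib, ← Finset.sum_smul, hl1, one_smul]
    rw [hsplit, map_sum]
    have : ∀ j, (T (v i) - f) (l j • (v i - v j)) = l j * M i j := by
      intro j
      rw [map_smul]
      simp [hM]
    rw [Finset.sum_congr rfl (fun j _ => this j)]
    exact hlM i

lemma minty (T : E → StrongDual ℝ E) (hcont : Continuous T)
    (w : E) (f : StrongDual ℝ E)
    (h : ∀ z : E, ‖z - w‖ ≤ 1 → 0 ≤ (T z - f) (z - w)) : T w = f := by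
  have key : ∀ x : E, 0 ≤ (T w - f) x := by
    intro x
    set t : ℕ → ℝ := fun n => (1 / (n + 1)) * (1 / (‖x‖ + 1)) with ht
    have htpos : ∀ n, 0 < t n := by
      intro n
      apply mul_pos <;> [positivity; positivity]
    have htle : ∀ n, t n * ‖x‖ ≤ 1 := by
      intro n
      have h1 : t n ≤ 1 / (‖x‖ + 1) := by
        rw [ht]
        have : (1:ℝ) / (n + 1) ≤ 1 := by
          rw [div_le_one (by positivity)]
          linarith [Nat.cast_nonneg (α := ℝ) n]
        nlinarith [one_div_pos.mpr (show (0:ℝ) < ‖x‖ + 1 by positivity)]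
      have h2 : (1 / (‖x‖ + 1)) * ‖x‖ ≤ 1 := by
        rw [div_mul_eq_mul_div, div_le_one (by positivity)]
        linarith [norm_nonneg x]
      calc t n * ‖x‖ ≤ (1 / (‖x‖ + 1)) * ‖x‖ :=
            mul_le_mul_of_nonneg_right h1 (norm_nonneg x)
        _ ≤ 1 := h2
    have hstep : ∀ n, 0 ≤ (T (w + t n • x) - f) x := by
      intro n
      have hd : ‖(w + t n • x) - w‖ ≤ 1 := by
        rw [add_sub_cancel_left, norm_smul, Real.norm_eq_abs, abs_of_pos (htpos n)]
        exact htle n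
      have := h _ hd
      rw [add_sub_cancel_left, map_smul] at this
      exact nonneg_of_mul_nonneg_right (by simpa [smul_eq_mul] using this) (htpos n)
    have htendsto : Tendsto (fun n : ℕ => w + t n • x) atTop (nhds w) := by
      have h0 : Tendsto t atTop (nhds 0) := by
        rw [ht]
        have : Tendsto (fun n : ℕ => 1 / ((n : ℝ) + 1)) atTop (nhds 0) :=
          tendsto_one_div_add_atTop_nhds_zero_nat
        simpa using this.mul_const (1 / (‖x‖ + 1))
      have : Tendsto (fun n => t n • x) atTop (nhds ((0:ℝ) • x)) := h0.smul_const x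
      simpa using tendsto_const_nhds.add this
    have heval : Continuous fun z : E => (T z - f) x := by
      have h1 : Continuous fun g : StrongDual ℝ E => g x :=
        (ContinuousLinearMap.apply ℝ ℝ x).continuous
      have : Continuous fun z : E => T z x := h1.comp hcont
      exact (this.sub continuous_const : Continuous fun z : E => T z x - f x)
    exact ge_of_tendsto ((heval.tendsto w).comp htendsto) (Filter.Eventually.of_forall hstep)
  have hzero : T w - f = 0 := by
    ext x
    have h1 := key x
    have h2 := key (-x)
    rw [map_neg] at h2
    simp only [ContinuousLinearMap.zero_apply]
    linarith
  have := sub_eq_zero.mp hzero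
  exact this


lemma minty_surjective
    (hrefl : Function.Surjective (NormedSpace.inclusionInDoubleDual ℝ E))
    (T : E → StrongDual ℝ E) (hcont : Continuous T)
    (hmono' : ∀ a b : E, 0 ≤ (T a - T b) (a - b))
    (hcoer : ∀ M : ℝ, ∃ R : ℝ, ∀ u : E, R ≤ ‖u‖ → M ≤ T u u / ‖u‖)
    (f : StrongDual ℝ E) : ∃ u : E, T u = f := by
  classical
  obtain ⟨R₀, hR₀⟩ := hcoer (‖f‖ + 1)
  set r₁ : ℝ := max R₀ 1 with hr₁
  set R : ℝ := 2 * r₁ + 1 with hRdef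
  have hr₁1 : (1:ℝ) ≤ r₁ := le_max_right _ _
  have hR0 : (0:ℝ) ≤ R := by rw [hRdef]; linarith
  have hco : ∀ z : E, r₁ ≤ ‖z‖ → (‖f‖ + 1) * ‖z‖ ≤ T z z := by
    intro z hz
    have hpos : (0:ℝ) < ‖z‖ := lt_of_lt_of_le (by linarith) hz
    have := hR₀ z (le_trans (le_max_left _ _) hz)
    rw [le_div_iff₀ hpos] at this
    linarith
  -- Galerkin approximations indexed by finite sets
  have hgal : ∀ S : Finset E, ∃ u : E, ‖u‖ ≤ R ∧
      ∀ v ∈ insert (0:E) (S.filter fun z => ‖z‖ ≤ R), 0 ≤ (T v - f) (v - u) := by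
    intro S
    apply galerkin T hmono' f R
    · intro v hv
      rcases Finset.mem_insert.mp hv with h | h
      · rw [h, norm_zero]; exact hR0
      · exact (Finset.mem_filter.mp h).2
    · exact ⟨0, Finset.mem_insert_self _ _⟩
  choose uu hub hus using hgal
  obtain ⟨U, hU⟩ := Filter.exists_ultrafilter_le (atTop : Filter (Finset E))
  obtain ⟨w, hwR, hwφ⟩ := exists_ultrafilter_weak_limit hrefl U uu R hub
  have hkey : ∀ v : E, ‖v‖ ≤ R → 0 ≤ (T v - f) (v - w) := by
    intro v hv
    have hev : ∀ᶠ S in (atTop : Filter (Finset E)), 0 ≤ (T v - f) (v - uu S) := by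
      rw [eventually_atTop]
      refine ⟨{v}, fun S hS => ?_⟩
      apply hus S v
      apply Finset.mem_insert_of_mem
      rw [Finset.mem_filter]
      exact ⟨hS (Finset.mem_singleton_self v), hv⟩
    have htend : Tendsto (fun S => (T v - f) (v - uu S)) U (nhds ((T v - f) (v - w))) := by
      have h1 := hwφ (T v - f)
      have h2 : Tendsto (fun S => (T v - f) v - (T v - f) (uu S)) U
          (nhds ((T v - f) v - (T v - f) w)) := tendsto_const_nhds.sub h1
      simpa [map_sub] using h2
    exact ge_of_tendsto htend (hev.filter_mono hU)
  have hw2 : ‖w‖ ≤ 2 * r₁ := by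
    by_contra hcontra
    push_neg at hcontra
    set z : E := (1/2 : ℝ) • w with hzdef
    have hznorm : ‖z‖ = ‖w‖ / 2 := by
      rw [hzdef, norm_smul, Real.norm_eq_abs]
      rw [abs_of_pos (by norm_num : (0:ℝ) < 1/2)]
      ring
    have hz1 : r₁ ≤ ‖z‖ := by rw [hznorm]; linarith
    have hzR : ‖z‖ ≤ R := by rw [hznorm, hRdef]; linarith [hwR]
    have h1 := hkey z hzR
    have hzw : z - w = -z := by
      rw [hzdef]
      module
    rw [hzw, map_neg] at h1
    have h2 : (T z - f) z ≤ 0 := by linarith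
    rw [ContinuousLinearMap.sub_apply] at h2
    have h3 : f z ≤ ‖f‖ * ‖z‖ := le_trans (le_abs_self _) (by simpa using f.le_opNorm z)
    have h4 := hco z hz1
    have : ‖z‖ ≤ 0 := by nlinarith
    linarith
  refine ⟨w, minty T hcont w f fun z hz => ?_⟩
  apply hkey
  calc ‖z‖ = ‖(z - w) + w‖ := by rw [sub_add_cancel]
    _ ≤ ‖z - w‖ + ‖w‖ := norm_add_le _ _
    _ ≤ 1 + 2 * r₁ := add_le_add hz hw2
    _ = R := by rw [hRdef]; ring


lemma minty_norm_bound (T : E → StrongDual ℝ E)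
    (hcoer : ∀ M : ℝ, ∃ R : ℝ, ∀ u : E, R ≤ ‖u‖ → M ≤ T u u / ‖u‖) (K : ℝ) :
    ∃ C : ℝ, 0 ≤ C ∧ ∀ z : E, ‖T z‖ ≤ K → ‖z‖ ≤ C := by
  obtain ⟨R₀, hR₀⟩ := hcoer (K + 1)
  refine ⟨max R₀ 1, le_trans zero_le_one (le_max_right _ _), fun z hz => ?_⟩
  by_contra hcon
  push_neg at hcon
  have hpos : (0:ℝ) < ‖z‖ := lt_of_le_of_lt (le_trans zero_le_one (le_max_right _ _)) hcon
  have h1 := hR₀ z (le_of_lt (lt_of_le_of_lt (le_max_left _ _) hcon))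
  have h2 : T z z ≤ ‖T z‖ * ‖z‖ := le_trans (le_abs_self _) (by simpa using (T z).le_opNorm z)
  rw [le_div_iff₀ hpos] at h1
  nlinarith



lemma minty_inv_tendsto
    (hrefl : Function.Surjective (NormedSpace.inclusionInDoubleDual ℝ E))
    (T : E → StrongDual ℝ E) (hcont : Continuous T)
    (hmono' : ∀ a b : E, 0 ≤ (T a - T b) (a - b))
    (hcoer : ∀ M : ℝ, ∃ R : ℝ, ∀ u : E, R ≤ ‖u‖ → M ≤ T u u / ‖u‖)
    (hSplus : ∀ (u : ℕ → E) (u₀ : E),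
      (∀ φ : StrongDual ℝ E, Tendsto (fun n => φ (u n)) atTop (nhds (φ u₀))) →
      limsup (fun n => T (u n) (u n - u₀)) atTop ≤ 0 →
      Tendsto u atTop (nhds u₀))
    (hinj : Function.Injective T)
    (g : ℕ → StrongDual ℝ E) (g₀ : StrongDual ℝ E)
    (hg : Tendsto g atTop (nhds g₀))
    (u : ℕ → E) (u₀ : E) (hu : ∀ n, T (u n) = g n) (hu₀ : T u₀ = g₀) :
    Tendsto u atTop (nhds u₀) := by
  -- the sequence u is bounded
  have hgK : ∃ K : ℝ, ∀ n, ‖g n‖ ≤ K := by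
    have h1 : Tendsto (fun n => ‖g n‖) atTop (nhds ‖g₀‖) := hg.norm
    obtain ⟨K, hK⟩ := h1.bddAbove_range
    exact ⟨K, fun n => hK ⟨n, rfl⟩⟩
  obtain ⟨K, hK⟩ := hgK
  obtain ⟨C, hC0, hC⟩ := minty_norm_bound T hcoer K
  have hub : ∀ n, ‖u n‖ ≤ C := fun n => hC _ (by rw [hu n]; exact hK n)
  -- the error term (g n - g₀)(x n) tends to zero for any bounded sequence x
  have herr : ∀ (x : ℕ → E) (D : ℝ), (∀ n, ‖x n‖ ≤ D) →
      Tendsto (fun n => (g n - g₀) (x n)) atTop (nhds 0) := by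
    intro x D hD
    refine squeeze_zero_norm (a := fun n => ‖g n - g₀‖ * D) (fun n => ?_) ?_
    · calc ‖(g n - g₀) (x n)‖ ≤ ‖g n - g₀‖ * ‖x n‖ := (g n - g₀).le_opNorm (x n)
        _ ≤ ‖g n - g₀‖ * D := by
            have := hD n
            have := norm_nonneg (g n - g₀)
            nlinarith
    · have h0 : Tendsto (fun n => ‖g n - g₀‖) atTop (nhds 0) :=
        tendsto_iff_norm_sub_tendsto_zero.mp hg
      simpa using h0.mul_const D
  -- weak convergence of u to u₀
  have hweak : ∀ φ : StrongDual ℝ E,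
      Tendsto (fun n => φ (u n)) atTop (nhds (φ u₀)) := by
    intro φ
    rw [Filter.tendsto_iff_ultrafilter]
    intro U hU
    obtain ⟨w, hwC, hwφ⟩ := exists_ultrafilter_weak_limit hrefl U u C hub
    have hw : w = u₀ := by
      apply hinj
      rw [hu₀]
      apply minty T hcont w g₀
      intro z _
      have hn : ∀ n, 0 ≤ (T z - g n) (z - u n) := by
        intro n
        rw [← hu n]
        exact hmono' z (u n)
      have htend : Tendsto (fun n => (T z - g n) (z - u n)) U
          (nhds ((T z - g₀) (z - w))) := by
        have e1 : Tendsto (fun n => T z (u n)) (↑U) (nhds (T z w)) := hwφ (T z)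
        have e2 : Tendsto (fun n => g n z) (↑U) (nhds (g₀ z)) :=
          (((ContinuousLinearMap.apply ℝ ℝ z).continuous.tendsto g₀).comp hg).mono_left hU
        have e3 : Tendsto (fun n => g n (u n)) (↑U) (nhds (g₀ w)) := by
          have e3a : Tendsto (fun n => (g n - g₀) (u n)) (↑U) (nhds 0) :=
            (herr u C hub).mono_left hU
          have e3b : Tendsto (fun n => g₀ (u n)) (↑U) (nhds (g₀ w)) := hwφ g₀
          have := e3a.add e3b
          simp only [ContinuousLinearMap.sub_apply, zero_add] at this
          simpa using this
        have comb : Tendsto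
            (fun n => T z z - T z (u n) - g n z + g n (u n)) (↑U)
            (nhds (T z z - T z w - g₀ z + g₀ w)) :=
          ((tendsto_const_nhds.sub e1).sub e2).add e3
        have heq : ∀ n, (T z - g n) (z - u n) =
            T z z - T z (u n) - g n z + g n (u n) := by
          intro n
          simp only [ContinuousLinearMap.sub_apply, map_sub]
          ring
        have heq₀ : (T z - g₀) (z - w) = T z z - T z w - g₀ z + g₀ w := by
          simp only [ContinuousLinearMap.sub_apply, map_sub]
          ring
        rw [heq₀]
        simpa only [heq] using comb
      exact ge_of_tendsto htend (Filter.Eventually.of_forall hn)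
    rw [← hw]
    exact hwφ φ
  -- limsup condition
  have hls : Tendsto (fun n => T (u n) (u n - u₀)) atTop (nhds 0) := by
    have heq : ∀ n, T (u n) (u n - u₀) =
        (g n - g₀) (u n - u₀) + (g₀ (u n) - g₀ u₀) := by
      intro n
      rw [hu n]
      simp only [ContinuousLinearMap.sub_apply, map_sub]
      ring
    have e1 : Tendsto (fun n => (g n - g₀) (u n - u₀)) atTop (nhds 0) := by
      apply herr (fun n => u n - u₀) (C + ‖u₀‖)
      intro n
      calc ‖u n - u₀‖ ≤ ‖u n‖ + ‖u₀‖ := norm_sub_le _ _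
        _ ≤ C + ‖u₀‖ := by linarith [hub n]
    have e2 : Tendsto (fun n => g₀ (u n) - g₀ u₀) atTop (nhds 0) := by
      have := (hweak g₀).sub_const (g₀ u₀)
      simpa using this
    have := e1.add e2
    simp only [add_zero] at this
    simpa only [← heq] using this
  exact hSplus u u₀ hweak (by rw [hls.limsup_eq])


end MintyBrowderAux

/-- A bounded, continuous, strictly monotone, coercive operator of type `(S₊)`
from a reflexive Banach space to its dual is a bijection whose inverse is
continuous and maps bounded sets to bounded sets (Minty–Browder). -/
theorem minty_browder_homeomorphism {E : Type*} [NormedAddCommGroup E]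
    [NormedSpace ℝ E] [CompleteSpace E]
    (hrefl : Function.Surjective (NormedSpace.inclusionInDoubleDual ℝ E))
    (T : E → StrongDual ℝ E)
    (hbdd : ∀ s : Set E, IsBounded s → IsBounded (T '' s))
    (hcont : Continuous T)
    (hmono : ∀ u v : E, u ≠ v → 0 < (T u - T v) (u - v))
    (hcoer : ∀ M : ℝ, ∃ R : ℝ, ∀ u : E, R ≤ ‖u‖ → M ≤ T u u / ‖u‖)
    (hSplus : ∀ (u : ℕ → E) (u₀ : E),
      (∀ φ : StrongDual ℝ E, Tendsto (fun n => φ (u n)) atTop (nhds (φ u₀))) →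
      limsup (fun n => T (u n) (u n - u₀)) atTop ≤ 0 →
      Tendsto u atTop (nhds u₀)) :
    Function.Bijective T ∧
      ∃ Tinv : StrongDual ℝ E → E,
        (∀ u, Tinv (T u) = u) ∧ (∀ f, T (Tinv f) = f) ∧
        Continuous Tinv ∧
        ∀ s : Set (StrongDual ℝ E), IsBounded s → IsBounded (Tinv '' s) := by
  classical
  have hmono' : ∀ a b : E, 0 ≤ (T a - T b) (a - b) := by
    intro a b
    rcases eq_or_ne a b with rfl | h
    · simp
    · exact (hmono a b h).le
  have hinj : Function.Injective T := by
    intro a b hab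
    by_contra h
    have hlt := hmono a b h
    rw [hab] at hlt
    simp at hlt
  have hsurj : ∀ f : StrongDual ℝ E, ∃ u, T u = f :=
    minty_surjective hrefl T hcont hmono' hcoer
  set Tinv : StrongDual ℝ E → E := fun f => (hsurj f).choose with hTinvdef
  have hTinv : ∀ f, T (Tinv f) = f := fun f => (hsurj f).choose_spec
  have hinvT : ∀ u, Tinv (T u) = u := fun u => hinj (hTinv (T u))
  refine ⟨⟨hinj, fun f => ⟨Tinv f, hTinv f⟩⟩, Tinv, hinvT, hTinv, ?_, ?_⟩
  · rw [continuous_iff_seqContinuous]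
    intro g g₀ hg
    exact minty_inv_tendsto hrefl T hcont hmono' hcoer hSplus hinj g g₀ hg
      (fun n => Tinv (g n)) (Tinv g₀) (fun n => hTinv (g n)) (hTinv g₀)
  · intro s hs
    rw [isBounded_iff_forall_norm_le] at hs ⊢
    obtain ⟨K, hK⟩ := hs
    obtain ⟨C, hC0, hC⟩ := minty_norm_bound T hcoer K
    refine ⟨C, ?_⟩
    rintro x ⟨fx, hfx, rfl⟩
    exact hC _ (by rw [hTinv fx]; exact hK fx hfx)
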